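/- For every t ≥ 1 and n = 2^t, the fundamental coding gain of the Barnes–Wall lattice satisfies γ(BW_n) = d(BW_n)/vol(BW_n)^{2/n} = √(n/2); in particular γ(BW_{2n}) = √2·γ(BW_n). -/

import Mathlib

open Matrix

noncomputable section

/-- `Rmat n` is the `n × n` matrix `I_{n/2} ⊗ R(2)`, block diagonal with
`2 × 2` blocks `[[1, 1], [1, -1]]`, acting on row vectors on the right. -/
def Rmat (n : ℕ) : Matrix (Fin n) (Fin n) ℝ :=
  Matrix.of fun i j =>
    if (i : ℕ) / 2 = (j : ℕ) / 2 then
      if (i : ℕ) % 2 = 1 ∧ (j : ℕ) % 2 = 1 then -1 else 1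
    else 0

/-- Concatenation `(u, v)` of two `2^t`-dimensional vectors into a
`2^(t+1)`-dimensional vector. -/
def concat {t : ℕ} (u v : Fin (2 ^ t) → ℝ) : Fin (2 ^ (t + 1)) → ℝ := fun i =>
  if h : (i : ℕ) < 2 ^ t then u ⟨i, h⟩
  else v ⟨(i : ℕ) - 2 ^ t, by
    have hi := i.isLt
    have h2 : 2 ^ (t + 1) = 2 ^ t + 2 ^ t := by rw [pow_succ]; ring
    omega⟩

/-- The Barnes–Wall lattices `BW_{2^t} ⊆ ℝ^{2^t}`, defined recursively by
`BW_2 = ℤ²` and `BW_{2n} = {(u, u + v) : u ∈ BW_n, v ∈ BW_n · R(n)}`. -/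
def BW : ∀ t : ℕ, Set (Fin (2 ^ t) → ℝ)
  | 0 => {x | ∀ i, ∃ z : ℤ, x i = (z : ℝ)}
  | (t + 1) =>
    {x | ∃ u v : Fin (2 ^ t) → ℝ, u ∈ BW t ∧
      (∃ w ∈ BW t, v = Matrix.vecMul w (Rmat (2 ^ t))) ∧ x = concat u (u + v)}

/-- `RBW_n = {x · R(n) : x ∈ BW_n}`. -/
def RBW (t : ℕ) : Set (Fin (2 ^ t) → ℝ) :=
  (fun x => Matrix.vecMul x (Rmat (2 ^ t))) '' BW t

/-- Squared Euclidean norm. -/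
def sqnorm {m : ℕ} (x : Fin m → ℝ) : ℝ := ∑ i, x i ^ 2

/-- `minDist Λ` is the minimum of `‖x‖²` over nonzero `x ∈ Λ`. -/
def minDist {m : ℕ} (Λ : Set (Fin m → ℝ)) : ℝ :=
  sInf (sqnorm '' {x ∈ Λ | x ≠ 0})

/-- `B` is (the matrix of) a `ℤ`-basis of `Λ`: `B` is invertible and `Λ` is the set
of integer combinations of the rows of `B`. The covolume of `Λ` is then `|det B|`. -/
def IsZBasis {m : ℕ} (B : Matrix (Fin m) (Fin m) ℝ) (Λ : Set (Fin m → ℝ)) : Prop :=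
  B.det ≠ 0 ∧
    Λ = {x | ∃ z : Fin m → ℤ, x = Matrix.vecMul (fun i => (z i : ℝ)) B}

/-- The fundamental coding gain `γ(Λ) = d(Λ)/vol(Λ)^{2/m}`, computed from a
`ℤ`-basis matrix `B` of `Λ` (so `vol(Λ) = |det B|`). -/
def codingGain {m : ℕ} (Λ : Set (Fin m → ℝ)) (B : Matrix (Fin m) (Fin m) ℝ) : ℝ :=
  minDist Λ / |B.det| ^ ((2 : ℝ) / (m : ℝ))

-- ====== basic infrastructure ======

lemma two_pow_succ' (t : ℕ) : 2 ^ (t + 1) = 2 ^ t + 2 ^ t := by rw [pow_succ]; ring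

/-- The splitting equivalence. -/
def pe (t : ℕ) : Fin (2 ^ (t + 1)) ≃ Fin (2 ^ t) ⊕ Fin (2 ^ t) :=
  (finCongr (two_pow_succ' t)).trans finSumFinEquiv.symm

lemma pe_apply_lt {t : ℕ} (i : Fin (2 ^ (t+1))) (h : (i : ℕ) < 2 ^ t) :
    pe t i = Sum.inl ⟨i, h⟩ := by
  have : finSumFinEquiv (Sum.inl (⟨i, h⟩ : Fin (2 ^ t)) : Fin (2^t) ⊕ Fin (2^t)) =
      finCongr (two_pow_succ' t) i := by
    simp [finSumFinEquiv]
    rfl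
  simpa [pe, Equiv.symm_apply_eq] using this.symm

lemma pe_apply_ge {t : ℕ} (i : Fin (2 ^ (t+1))) (h : ¬ (i : ℕ) < 2 ^ t) :
    pe t i = Sum.inr ⟨(i:ℕ) - 2 ^ t, by have := i.isLt; have := two_pow_succ' t; omega⟩ := by
  have : finSumFinEquiv (Sum.inr (⟨(i:ℕ) - 2^t, by have := i.isLt; have := two_pow_succ' t; omega⟩ : Fin (2 ^ t)) : Fin (2^t) ⊕ Fin (2^t)) =
      finCongr (two_pow_succ' t) i := by
    simp [finSumFinEquiv]
    ext
    simp
    omega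
  simpa [pe, Equiv.symm_apply_eq] using this.symm

lemma concat_eq {t : ℕ} (u v : Fin (2 ^ t) → ℝ) :
    concat u v = Sum.elim u v ∘ (pe t) := by
  funext i
  by_cases h : (i : ℕ) < 2 ^ t
  · simp [concat, h, pe_apply_lt i h]
  · simp [concat, h, pe_apply_ge i h]

lemma concat_add {t : ℕ} (u v u' v' : Fin (2 ^ t) → ℝ) :
    concat u v + concat u' v' = concat (u + u') (v + v') := by
  funext i
  by_cases h : (i : ℕ) < 2 ^ t <;> simp [concat, h]

lemma concat_eq_zero {t : ℕ} {u v : Fin (2 ^ t) → ℝ} :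
    concat u v = 0 ↔ u = 0 ∧ v = 0 := by
  simp only [concat_eq]
  constructor
  · intro h
    constructor
    · funext i
      have := congrFun h ((pe t).symm (Sum.inl i))
      simpa using this
    · funext i
      have := congrFun h ((pe t).symm (Sum.inr i))
      simpa using this
  · rintro ⟨rfl, rfl⟩
    funext i
    rcases pe t i with a | b <;> simp

lemma sqnorm_concat {t : ℕ} (u v : Fin (2 ^ t) → ℝ) :
    sqnorm (concat u v) = sqnorm u + sqnorm v := by
  rw [concat_eq]
  unfold sqnorm
  have := Equiv.sum_comp (pe t) (fun s => (Sum.elim u v s) ^ 2)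
  rw [show (fun i => ((Sum.elim u v) ∘ (pe t)) i ^ 2) = fun i => (fun s => (Sum.elim u v s)^2) (pe t i) from rfl, this]
  simp [Fintype.sum_sum_type]

lemma sqnorm_nonneg {m : ℕ} (x : Fin m → ℝ) : 0 ≤ sqnorm x :=
  Finset.sum_nonneg fun i _ => sq_nonneg _

lemma sqnorm_neg {m : ℕ} (x : Fin m → ℝ) : sqnorm (-x) = sqnorm x := by
  unfold sqnorm; simp

lemma sqnorm_eq_dot {m : ℕ} (x : Fin m → ℝ) : sqnorm x = x ⬝ᵥ x := by
  unfold sqnorm dotProduct; simp [sq]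

-- ====== Rmat facts ======

lemma Rmat_one : Rmat 1 = 1 := by
  ext i j
  fin_cases i; fin_cases j
  simp [Rmat]

lemma Rmat_symm (n : ℕ) (i j : Fin n) : Rmat n i j = Rmat n j i := by
  simp only [Rmat, Matrix.of_apply]
  by_cases h : (i : ℕ) / 2 = (j : ℕ) / 2
  · rw [if_pos h, if_pos h.symm, if_congr and_comm rfl rfl]
  · rw [if_neg h, if_neg (fun hh => h hh.symm)]

lemma Rmat_transpose (n : ℕ) : (Rmat n)ᵀ = Rmat n := by
  ext i j
  exact Rmat_symm n j i

lemma Rmat_eq_zero {n : ℕ} {i j : Fin n} (h : ¬ (i:ℕ)/2 = (j:ℕ)/2) : Rmat n i j = 0 := by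
  simp [Rmat, h]

lemma Rmat_eq_one {n : ℕ} {i j : Fin n} (h : (i:ℕ)/2 = (j:ℕ)/2)
    (h2 : (i:ℕ)%2 = 0 ∨ (j:ℕ)%2 = 0) : Rmat n i j = 1 := by
  simp only [Rmat, Matrix.of_apply, if_pos h]
  rw [if_neg (by omega)]

lemma Rmat_eq_neg_one {n : ℕ} {i j : Fin n} (h : (i:ℕ)/2 = (j:ℕ)/2)
    (h1 : (i:ℕ)%2 = 1) (h2 : (j:ℕ)%2 = 1) : Rmat n i j = -1 := by
  simp only [Rmat, Matrix.of_apply, if_pos h]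
  rw [if_pos ⟨h1, h2⟩]

lemma Rmat_mul_self {n : ℕ} (hn : n % 2 = 0) : Rmat n * Rmat n = (2 : ℝ) • 1 := by
  ext i j
  rw [Matrix.mul_apply]
  have hi2 : 2 * ((i:ℕ) / 2) < n := by omega
  have hi21 : 2 * ((i:ℕ) / 2) + 1 < n := by omega
  set k0 : Fin n := ⟨2 * ((i:ℕ) / 2), hi2⟩ with hk0
  set k1 : Fin n := ⟨2 * ((i:ℕ) / 2) + 1, hi21⟩ with hk1
  have hne : k0 ≠ k1 := by simp [hk0, hk1, Fin.ext_iff]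
  have hk0i : (k0 : ℕ) / 2 = (i : ℕ) / 2 := by simp [hk0] <;> omega
  have hk1i : (k1 : ℕ) / 2 = (i : ℕ) / 2 := by simp [hk1] <;> omega
  have hk0m : (k0 : ℕ) % 2 = 0 := by simp [hk0] <;> omega
  have hk1m : (k1 : ℕ) % 2 = 1 := by simp [hk1] <;> omega
  have hsupp : ∀ k : Fin n, k ∉ ({k0, k1} : Finset (Fin n)) →
      Rmat n i k * Rmat n k j = 0 := by
    intro k hk
    simp only [Finset.mem_insert, Finset.mem_singleton] at hk
    push_neg at hk
    have : ¬ ((i:ℕ)/2 = (k:ℕ)/2) := by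
      intro h
      rcases Nat.mod_two_eq_zero_or_one (k:ℕ) with h1 | h1
      · exact hk.1 (by apply Fin.ext; simp [hk0] <;> omega)
      · exact hk.2 (by apply Fin.ext; simp [hk1] <;> omega)
    rw [Rmat_eq_zero this, zero_mul]
  rw [← Finset.sum_subset (Finset.subset_univ ({k0, k1} : Finset (Fin n)))
    (fun k _ hk => hsupp k hk), Finset.sum_pair hne]
  have hik0 : (i:ℕ)/2 = (k0:ℕ)/2 := hk0i.symm
  have hik1 : (i:ℕ)/2 = (k1:ℕ)/2 := hk1i.symm
  by_cases hij : (i:ℕ)/2 = (j:ℕ)/2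
  · have hij2 : (k0:ℕ)/2 = (j:ℕ)/2 := hk0i.trans hij
    have hij3 : (k1:ℕ)/2 = (j:ℕ)/2 := hk1i.trans hij
    rw [Rmat_eq_one hik0 (Or.inr hk0m), Rmat_eq_one hij2 (Or.inl hk0m)]
    by_cases heq : i = j
    · subst heq
      rw [Matrix.smul_apply, Matrix.one_apply_eq]
      rcases Nat.mod_two_eq_zero_or_one (i:ℕ) with h1 | h1
      · rw [Rmat_eq_one hik1 (Or.inl h1), Rmat_eq_one hij3 (Or.inr h1)]; norm_num
      · rw [Rmat_eq_neg_one hik1 h1 hk1m, Rmat_eq_neg_one hij3 hk1m h1]; norm_num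
    · have hmod : (i:ℕ) % 2 ≠ (j:ℕ) % 2 := fun h => heq (Fin.ext (by omega))
      rw [Matrix.smul_apply, Matrix.one_apply_ne heq]
      rcases Nat.mod_two_eq_zero_or_one (i:ℕ) with h1 | h1
      · have h2 : (j:ℕ)%2 = 1 := by omega
        rw [Rmat_eq_one hik1 (Or.inl h1), Rmat_eq_neg_one hij3 hk1m h2]; norm_num
      · have h2 : (j:ℕ)%2 = 0 := by omega
        rw [Rmat_eq_neg_one hik1 h1 hk1m, Rmat_eq_one hij3 (Or.inr h2)]; norm_num
  · have h0 : ¬ ((k0:ℕ)/2 = (j:ℕ)/2) := by rw [hk0i]; exact hij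
    have h1 : ¬ ((k1:ℕ)/2 = (j:ℕ)/2) := by rw [hk1i]; exact hij
    have hne2 : i ≠ j := fun h => hij (by rw [h])
    rw [Rmat_eq_zero h0, Rmat_eq_zero h1, Matrix.smul_apply, Matrix.one_apply_ne hne2]
    norm_num

lemma vecMul_Rmat_Rmat {n : ℕ} (hn : n % 2 = 0) (w : Fin n → ℝ) :
    Matrix.vecMul (Matrix.vecMul w (Rmat n)) (Rmat n) = (2 : ℝ) • w := by
  rw [Matrix.vecMul_vecMul, Rmat_mul_self hn]
  funext j
  simp [Matrix.vecMul, dotProduct, Matrix.one_apply, Finset.mul_sum]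
  ring

lemma sqnorm_vecMul_Rmat {n : ℕ} (hn : n % 2 = 0) (w : Fin n → ℝ) :
    sqnorm (Matrix.vecMul w (Rmat n)) = 2 * sqnorm w := by
  rw [sqnorm_eq_dot, sqnorm_eq_dot]
  have h1 : Matrix.vecMul w (Rmat n) = (Rmat n)ᵀ.mulVec w := by
    rw [Matrix.mulVec_transpose]
  rw [h1, Matrix.dotProduct_mulVec, Matrix.vecMul_transpose, Matrix.mulVec_mulVec,
    Rmat_transpose, Rmat_mul_self hn]
  rw [Matrix.smul_mulVec, Matrix.one_mulVec]
  simp [smul_dotProduct]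

lemma vecMul_Rmat_eq_zero {n : ℕ} (hn : n % 2 = 0) {w : Fin n → ℝ}
    (h : Matrix.vecMul w (Rmat n) = 0) : w = 0 := by
  have := vecMul_Rmat_Rmat hn w
  rw [h, Matrix.zero_vecMul] at this
  have h2 := congrArg (fun x => (2:ℝ)⁻¹ • x) this.symm
  simpa using h2

-- ====== block structure ======

lemma vecMul_concat_fromBlocks {t : ℕ} (a b : Fin (2^t) → ℝ)
    (A B C D : Matrix (Fin (2^t)) (Fin (2^t)) ℝ) :
    Matrix.vecMul (concat a b) ((Matrix.fromBlocks A B C D).submatrix (pe t) (pe t)) =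
      concat (Matrix.vecMul a A + Matrix.vecMul b C)
        (Matrix.vecMul a B + Matrix.vecMul b D) := by
  rw [concat_eq a b, Matrix.submatrix_vecMul_equiv]
  have h1 : (Sum.elim a b ∘ pe t) ∘ (pe t).symm = Sum.elim a b := by
    funext s; simp
  rw [h1, Matrix.vecMul_fromBlocks, concat_eq]
  simp

lemma Rmat_split {t : ℕ} (ht : 1 ≤ t) :
    Rmat (2^(t+1)) =
      (Matrix.fromBlocks (Rmat (2^t)) 0 0 (Rmat (2^t))).submatrix (pe t) (pe t) := by
  have he : (2:ℕ)^t = 2*2^(t-1) := by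
    nth_rewrite 1 [show t = (t-1)+1 by omega]
    rw [pow_succ]; ring
  ext i j
  rw [Matrix.submatrix_apply]
  by_cases hi : (i:ℕ) < 2^t <;> by_cases hj : (j:ℕ) < 2^t
  · rw [pe_apply_lt i hi, pe_apply_lt j hj, Matrix.fromBlocks_apply₁₁]
    simp only [Rmat, Matrix.of_apply]
  · rw [pe_apply_lt i hi, pe_apply_ge j hj, Matrix.fromBlocks_apply₁₂]
    rw [Rmat_eq_zero (by omega)]
    simp
  · rw [pe_apply_ge i hi, pe_apply_lt j hj, Matrix.fromBlocks_apply₂₁]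
    rw [Rmat_eq_zero (by omega)]
    simp
  · rw [pe_apply_ge i hi, pe_apply_ge j hj, Matrix.fromBlocks_apply₂₂]
    by_cases hd : (i:ℕ)/2 = (j:ℕ)/2
    · by_cases hp : (i:ℕ)%2 = 1 ∧ (j:ℕ)%2 = 1
      · rw [Rmat_eq_neg_one hd hp.1 hp.2,
          Rmat_eq_neg_one (by simp only [Fin.val_mk]; omega)
            (by simp only [Fin.val_mk]; omega) (by simp only [Fin.val_mk]; omega)]
      · have hor : (i:ℕ)%2 = 0 ∨ (j:ℕ)%2 = 0 := by omega
        rw [Rmat_eq_one hd hor,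
          Rmat_eq_one (by simp only [Fin.val_mk]; omega) (by simp only [Fin.val_mk]; omega)]
    · rw [Rmat_eq_zero hd, Rmat_eq_zero (by simp only [Fin.val_mk]; omega)]

lemma vecMul_concat_Rmat {t : ℕ} (ht : 1 ≤ t) (a b : Fin (2^t) → ℝ) :
    Matrix.vecMul (concat a b) (Rmat (2^(t+1))) =
      concat (Matrix.vecMul a (Rmat (2^t))) (Matrix.vecMul b (Rmat (2^t))) := by
  rw [Rmat_split ht, vecMul_concat_fromBlocks]
  simp

-- ====== BW basics ======

lemma bw_zero_mem : ∀ t, (0 : Fin (2^t) → ℝ) ∈ BW t := by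
  intro t
  induction t with
  | zero => intro i; exact ⟨0, by simp⟩
  | succ t ih =>
    refine ⟨0, 0, ih, ⟨0, ih, by simp [Matrix.zero_vecMul]⟩, ?_⟩
    funext i
    by_cases h : (i:ℕ) < 2^t <;> simp [concat, h]

lemma bw_add_mem : ∀ t, ∀ x y : Fin (2^t) → ℝ, x ∈ BW t → y ∈ BW t → x + y ∈ BW t := by
  intro t
  induction t with
  | zero =>
    intro x y hx hy i
    obtain ⟨a, ha⟩ := hx i
    obtain ⟨b, hb⟩ := hy i
    exact ⟨a + b, by simp [ha, hb]⟩
  | succ t ih =>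
    rintro x y ⟨u, v, hu, ⟨w, hw, rfl⟩, rfl⟩ ⟨u', v', hu', ⟨w', hw', rfl⟩, rfl⟩
    refine ⟨u + u', _, ih _ _ hu hu', ⟨w + w', ih _ _ hw hw', by
      rw [Matrix.add_vecMul]⟩, ?_⟩
    rw [concat_add]
    congr 1
    abel

lemma bw_neg_mem : ∀ t, ∀ x : Fin (2^t) → ℝ, x ∈ BW t → -x ∈ BW t := by
  intro t
  induction t with
  | zero =>
    intro x hx i
    obtain ⟨a, ha⟩ := hx i
    exact ⟨-a, by simp [ha]⟩
  | succ t ih =>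
    rintro x ⟨u, v, hu, ⟨w, hw, rfl⟩, rfl⟩
    refine ⟨-u, _, ih _ hu, ⟨-w, ih _ hw, by rw [Matrix.neg_vecMul]⟩, ?_⟩
    funext i
    by_cases h : (i:ℕ) < 2^t <;> simp [concat, h] <;> ring

lemma fin_pow_zero_eq (k k' : Fin (2^0)) : k = k' := by
  apply Fin.ext
  have h1 := k.isLt
  have h2 := k'.isLt
  norm_num at h1 h2
  omega

lemma Rmat_pow_zero : Rmat (2^0) = 1 := by
  ext i j
  rw [fin_pow_zero_eq i j, Rmat_symm]
  have h2 := j.isLt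
  norm_num at h2
  simp [Rmat, Matrix.one_apply, h2]

lemma bw_one_eq : BW 1 = {x : Fin 2 → ℝ | ∀ i, ∃ z : ℤ, x i = (z : ℝ)} := by
  ext x
  constructor
  · rintro ⟨u, v, hu, ⟨w, hw, rfl⟩, rfl⟩
    intro i
    obtain ⟨a, ha⟩ := hu 0
    obtain ⟨b, hb⟩ := hw 0
    have hv : ∀ j, (Matrix.vecMul w (Rmat (2^0))) j = w j := by
      intro j
      rw [Rmat_pow_zero, Matrix.vecMul_one]
    by_cases h : (i:ℕ) < 2^0
    · refine ⟨a, ?_⟩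
      simp only [concat, dif_pos h]
      rw [fin_pow_zero_eq ⟨(i:ℕ), h⟩ 0]
      exact ha
    · refine ⟨a + b, ?_⟩
      simp only [concat, dif_neg h]
      rw [Pi.add_apply, hv]
      rw [fin_pow_zero_eq ⟨(i:ℕ) - 2^0, _⟩ 0]
      push_cast [ha, hb]
      ring
  · intro hx
    obtain ⟨a, ha⟩ := hx 0
    obtain ⟨b, hb⟩ := hx 1
    refine ⟨fun _ => (a:ℝ), fun _ => (b:ℝ) - (a:ℝ), fun i => ⟨a, rfl⟩,
      ⟨fun _ => (b:ℝ) - (a:ℝ), fun i => ⟨b - a, by push_cast; ring⟩, by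
        rw [Rmat_pow_zero, Matrix.vecMul_one]⟩, ?_⟩
    funext i
    by_cases h : (i:ℕ) < 2^0
    · have : i = 0 := by apply Fin.ext; simp at h ⊢; omega
      simp [concat, h, this, ha]
    · have : i = 1 := by apply Fin.ext; have := i.isLt; simp at h ⊢; omega
      simp [concat, h, this, hb]

lemma pow_mod_two {t : ℕ} (ht : 1 ≤ t) : (2:ℕ)^t % 2 = 0 := by
  nth_rewrite 1 [show t = (t-1)+1 by omega]
  rw [pow_succ]
  omega

lemma rbw_subset_bw : ∀ t, ∀ x ∈ BW t, Matrix.vecMul x (Rmat (2^t)) ∈ BW t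
  | 0 => by
    intro x hx
    rw [Rmat_pow_zero, Matrix.vecMul_one]
    exact hx
  | 1 => by
    have key : ∀ y : Fin 2 → ℝ, (∀ i, ∃ z : ℤ, y i = (z:ℝ)) →
        (∀ j, ∃ z : ℤ, Matrix.vecMul y (Rmat 2) j = (z:ℝ)) := by
      intro y hy j
      obtain ⟨a, ha⟩ := hy 0
      obtain ⟨b, hb⟩ := hy 1
      have hval : Matrix.vecMul y (Rmat 2) j = y 0 * Rmat 2 0 j + y 1 * Rmat 2 1 j := by
        simp [Matrix.vecMul, dotProduct, Fin.sum_univ_two]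
      rcases j with ⟨jv, hj⟩
      interval_cases jv
      · refine ⟨a + b, ?_⟩
        rw [hval, Rmat_eq_one (by simp) (by simp), Rmat_eq_one (by simp) (by simp),
          ha, hb]
        push_cast; ring
      · refine ⟨a - b, ?_⟩
        rw [hval, Rmat_eq_one (by simp) (by simp),
          Rmat_eq_neg_one (by simp) (by simp) (by simp), ha, hb]
        push_cast; ring
    intro x hx
    rw [bw_one_eq] at hx ⊢
    exact fun j => key x hx j
  | (t+2) => by
    rintro x ⟨u, v, hu, ⟨w, hw, rfl⟩, rfl⟩
    rw [vecMul_concat_Rmat (by omega)]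
    have h2 : Matrix.vecMul (u + Matrix.vecMul w (Rmat (2^(t+1)))) (Rmat (2^(t+1))) =
        Matrix.vecMul u (Rmat (2^(t+1))) + (2:ℝ) • w := by
      rw [Matrix.add_vecMul, vecMul_Rmat_Rmat (pow_mod_two (by omega))]
    rw [h2]
    refine ⟨Matrix.vecMul u (Rmat (2^(t+1))), (2:ℝ) • w,
      rbw_subset_bw (t+1) u hu,
      ⟨Matrix.vecMul w (Rmat (2^(t+1))), rbw_subset_bw (t+1) w hw, ?_⟩, rfl⟩
    rw [vecMul_Rmat_Rmat (pow_mod_two (by omega))]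

lemma rbw_mem_bw {t : ℕ} {x : Fin (2^t) → ℝ} (hx : x ∈ BW t) :
    Matrix.vecMul x (Rmat (2^t)) ∈ BW t := rbw_subset_bw t x hx

-- ====== the explicit basis ======

def Bmat : ∀ t, Matrix (Fin (2^t)) (Fin (2^t)) ℝ
  | 0 => 1
  | (t+1) =>
    (Matrix.fromBlocks (Bmat t) (Bmat t) 0 (Bmat t * Rmat (2^t))).submatrix (pe t) (pe t)

lemma Bmat_det_succ (t : ℕ) :
    (Bmat (t+1)).det = (Bmat t).det * ((Bmat t).det * (Rmat (2^t)).det) := by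
  show ((Matrix.fromBlocks (Bmat t) (Bmat t) 0 (Bmat t * Rmat (2^t))).submatrix
    (pe t) (pe t)).det = _
  have : (Matrix.fromBlocks (Bmat t) (Bmat t) 0 (Bmat t * Rmat (2^t))).submatrix
      (pe t) (pe t) = Matrix.reindex (pe t).symm (pe t).symm
      (Matrix.fromBlocks (Bmat t) (Bmat t) 0 (Bmat t * Rmat (2^t))) := by
    rw [Matrix.reindex_apply]
    simp
  rw [this, Matrix.det_reindex_self, Matrix.det_fromBlocks_zero₂₁, Matrix.det_mul]

lemma Rmat_det_sq {n : ℕ} (hn : n % 2 = 0) : (Rmat n).det ^ 2 = 2 ^ n := by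
  have h := congrArg Matrix.det (Rmat_mul_self hn)
  rw [Matrix.det_mul, Matrix.det_smul, Matrix.det_one] at h
  simpa [sq, Fintype.card_fin] using h

lemma Bmat_det_sq {t : ℕ} (ht : 1 ≤ t) :
    (Bmat t).det ^ 2 = 2 ^ ((t - 1) * 2^(t-1)) := by
  induction t with
  | zero => omega
  | succ t ih =>
    rcases Nat.eq_or_lt_of_le ht with h1 | h1
    · -- t + 1 = 1
      have ht0 : t = 0 := by omega
      subst ht0
      rw [Bmat_det_succ]
      show ((Bmat 0).det * ((Bmat 0).det * (Rmat (2^0)).det))^2 = _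
      rw [show Bmat 0 = 1 from rfl, Matrix.det_one, Rmat_pow_zero, Matrix.det_one]
      norm_num
    · have ht' : 1 ≤ t := by omega
      rw [Bmat_det_succ]
      have : ((Bmat t).det * ((Bmat t).det * (Rmat (2^t)).det))^2 =
          ((Bmat t).det^2)^2 * ((Rmat (2^t)).det)^2 := by ring
      rw [this, ih ht', Rmat_det_sq (pow_mod_two ht')]
      rw [← pow_mul, ← pow_add]
      congr 1
      obtain ⟨s, rfl⟩ : ∃ s, t = s+1 := ⟨t-1, by omega⟩
      simp only [Nat.add_sub_cancel, pow_succ]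
      ring

lemma Bmat_det_ne_zero : ∀ t, (Bmat t).det ≠ 0 := by
  intro t
  rcases Nat.eq_zero_or_pos t with h | h
  · subst h; show (1 : Matrix (Fin (2^0)) (Fin (2^0)) ℝ).det ≠ 0; simp
  · intro hc
    have := Bmat_det_sq h
    rw [hc] at this
    norm_num at this
    exact absurd this.symm (by positivity)

lemma cast_comp_concat {t : ℕ} (a b : Fin (2^t) → ℤ) :
    (fun i => ((Sum.elim a b ∘ pe t) i : ℝ)) = concat (fun i => (a i : ℝ)) (fun i => (b i : ℝ)) := by
  rw [concat_eq]
  funext i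
  rcases h : pe t i with k | k <;> simp [h]

lemma bw_eq_span : ∀ t, BW t =
    {x | ∃ z : Fin (2^t) → ℤ, x = Matrix.vecMul (fun i => (z i : ℝ)) (Bmat t)} := by
  intro t
  induction t with
  | zero =>
    ext x
    constructor
    · intro hx
      refine ⟨fun i => (hx i).choose, ?_⟩
      rw [show Bmat 0 = 1 from rfl, Matrix.vecMul_one]
      funext i
      exact (hx i).choose_spec
    · rintro ⟨z, rfl⟩
      rw [show Bmat 0 = 1 from rfl, Matrix.vecMul_one]
      exact fun i => ⟨z i, rfl⟩
  | succ t ih =>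
    ext x
    constructor
    · rintro ⟨u, v, hu, ⟨w, hw, rfl⟩, rfl⟩
      rw [ih] at hu hw
      obtain ⟨a, rfl⟩ := hu
      obtain ⟨b, rfl⟩ := hw
      refine ⟨Sum.elim a b ∘ pe t, ?_⟩
      rw [cast_comp_concat]
      show concat _ _ = _
      rw [show Bmat (t+1) = (Matrix.fromBlocks (Bmat t) (Bmat t) 0
        (Bmat t * Rmat (2^t))).submatrix (pe t) (pe t) from rfl]
      rw [vecMul_concat_fromBlocks]
      rw [Matrix.vecMul_zero, add_zero, ← Matrix.vecMul_vecMul]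
    · rintro ⟨z, rfl⟩
      set a : Fin (2^t) → ℤ := fun i => z ((pe t).symm (Sum.inl i)) with ha
      set b : Fin (2^t) → ℤ := fun i => z ((pe t).symm (Sum.inr i)) with hb
      have hz : z = Sum.elim a b ∘ pe t := by
        funext i
        rcases h : pe t i with k | k
        · have : (pe t).symm (Sum.inl k) = i := by rw [← h]; simp
          simp [h, ha, this]
        · have : (pe t).symm (Sum.inr k) = i := by rw [← h]; simp
          simp [h, hb, this]
      rw [hz, cast_comp_concat]
      rw [show Bmat (t+1) = (Matrix.fromBlocks (Bmat t) (Bmat t) 0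
        (Bmat t * Rmat (2^t))).submatrix (pe t) (pe t) from rfl]
      rw [vecMul_concat_fromBlocks, Matrix.vecMul_zero, add_zero]
      refine ⟨Matrix.vecMul (fun i => (a i : ℝ)) (Bmat t),
        Matrix.vecMul (Matrix.vecMul (fun i => (b i : ℝ)) (Bmat t)) (Rmat (2^t)),
        ?_, ⟨Matrix.vecMul (fun i => (b i : ℝ)) (Bmat t), ?_, rfl⟩, ?_⟩
      · rw [ih]; exact ⟨a, rfl⟩
      · rw [ih]; exact ⟨b, rfl⟩
      · rw [← Matrix.vecMul_vecMul]

-- ====== minimum distance ======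

lemma sqnorm_ge_of_int {m : ℕ} (x : Fin m → ℝ) (hx : ∀ i, ∃ z : ℤ, x i = (z:ℝ))
    (h0 : x ≠ 0) : 1 ≤ sqnorm x := by
  have : ∃ i, x i ≠ 0 := by
    by_contra h
    push_neg at h
    exact h0 (funext fun i => h i)
  obtain ⟨i, hi⟩ := this
  obtain ⟨z, hz⟩ := hx i
  have hz0 : z ≠ 0 := by rintro rfl; simp at hz; exact hi hz
  have h1 : (1:ℝ) ≤ x i ^ 2 := by
    rw [hz]
    have : (1:ℤ) ≤ |z| := Int.one_le_abs hz0
    have : (1:ℝ) ≤ |(z:ℝ)| := by exact_mod_cast (by simpa using this)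
    nlinarith [abs_nonneg (z:ℝ), sq_abs (z:ℝ)]
  calc (1:ℝ) ≤ x i ^ 2 := h1
    _ ≤ sqnorm x := Finset.single_le_sum (fun j _ => sq_nonneg (x j)) (Finset.mem_univ i)

lemma bw_sqnorm_lb : ∀ t, ∀ x ∈ BW t, x ≠ 0 → (2:ℝ)^t / 2 ≤ sqnorm x
  | 0 => by
    intro x hx h0
    have := sqnorm_ge_of_int x hx h0
    norm_num
    linarith
  | 1 => by
    intro x hx h0
    rw [bw_one_eq] at hx
    have := sqnorm_ge_of_int x hx h0
    norm_num
    linarith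
  | (t+2) => by
    rintro x ⟨u, v, hu, ⟨w, hw, rfl⟩, rfl⟩ h0
    have hmod : (2:ℕ)^(t+1) % 2 = 0 := pow_mod_two (by omega)
    set v := Matrix.vecMul w (Rmat (2^(t+1))) with hv
    rw [sqnorm_concat]
    have hpow : (2:ℝ)^(t+2)/2 = 2 * ((2:ℝ)^(t+1)/2) := by ring
    rw [hpow]
    set d := (2:ℝ)^(t+1)/2 with hd
    have hvnorm : sqnorm v = 2 * sqnorm w := sqnorm_vecMul_Rmat hmod w
    by_cases hw0 : w = 0
    · have hv0 : v = 0 := by rw [hv, hw0, Matrix.zero_vecMul]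
      have hu0 : u ≠ 0 := by
        rintro rfl
        exact h0 (by rw [hv0]; simpa using concat_eq_zero.mpr ⟨rfl, by simp⟩)
      have := bw_sqnorm_lb (t+1) u hu hu0
      rw [hv0, add_zero]
      linarith
    · have hvne : v ≠ 0 := fun h => hw0 (vecMul_Rmat_eq_zero hmod h)
      have hvlb : 2 * d ≤ sqnorm v := by
        have := bw_sqnorm_lb (t+1) w hw hw0
        rw [hvnorm]
        linarith
      by_cases hu0 : u = 0
      · subst hu0
        rw [zero_add]
        have h1 : sqnorm (0 : Fin (2^(t+1)) → ℝ) = 0 := by simp [sqnorm]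
        rw [h1, zero_add]
        exact hvlb
      · by_cases huv : u + v = 0
        · have hveq : u = -v := by
            have := huv
            funext i
            have h2 := congrFun this i
            simp at h2 ⊢
            linarith
          have h1 : sqnorm (u + v) = 0 := by rw [huv]; simp [sqnorm]
          rw [h1, add_zero, hveq, sqnorm_neg]
          exact hvlb
        · have hvbw : v ∈ BW (t+1) := rbw_mem_bw hw
          have huvbw : u + v ∈ BW (t+1) := bw_add_mem (t+1) u v hu hvbw
          have l1 := bw_sqnorm_lb (t+1) u hu hu0
          have l2 := bw_sqnorm_lb (t+1) (u+v) huvbw huv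
          linarith

lemma bw_min_vec : ∀ t, 1 ≤ t → ∃ x ∈ BW t, x ≠ 0 ∧ sqnorm x = (2:ℝ)^t/2 := by
  intro t ht
  induction t with
  | zero => omega
  | succ t ih =>
    rcases Nat.eq_or_lt_of_le ht with h1 | h1
    · have ht0 : t = 0 := by omega
      subst ht0
      set x : Fin (2^1) → ℝ := fun i => if (i:ℕ) = 0 then 1 else 0 with hx
      refine ⟨x, ?_, ?_, ?_⟩
      · rw [bw_one_eq]
        intro i
        by_cases h : (i:ℕ) = 0
        · exact ⟨1, by simp [hx, h]; exact Fin.ext h⟩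
        · exact ⟨0, by simp [hx, h]; exact fun e => h (by simp [e])⟩
      · intro h
        have := congrFun h 0
        simp [hx] at this
      · have : sqnorm x = ∑ i : Fin 2, x i ^ 2 := rfl
        rw [this, Fin.sum_univ_two]
        norm_num [hx]
    · have ht' : 1 ≤ t := by omega
      obtain ⟨m, hm, hm0, hms⟩ := ih ht'
      refine ⟨concat m m, ⟨m, 0, hm, ⟨0, bw_zero_mem t, by rw [Matrix.zero_vecMul]⟩,
        by rw [add_zero]⟩, ?_, ?_⟩
      · intro h
        exact hm0 (concat_eq_zero.mp h).1
      · rw [sqnorm_concat, hms]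
        ring

lemma minDist_bw {t : ℕ} (ht : 1 ≤ t) :
    sInf (sqnorm '' {x ∈ BW t | x ≠ 0}) = (2:ℝ)^t/2 := by
  obtain ⟨x, hx, hx0, hxs⟩ := bw_min_vec t ht
  apply le_antisymm
  · exact csInf_le ⟨(2:ℝ)^t/2, by
      rintro s ⟨y, ⟨hy, hy0⟩, rfl⟩
      exact bw_sqnorm_lb t y hy hy0⟩ ⟨x, ⟨hx, hx0⟩, hxs⟩
  · refine le_csInf ⟨sqnorm x, ⟨x, ⟨hx, hx0⟩, rfl⟩⟩ ?_
    rintro s ⟨y, ⟨hy, hy0⟩, rfl⟩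
    exact bw_sqnorm_lb t y hy hy0

-- ====== uniqueness of |det| of a Z-basis ======

lemma vecMul_single_int {m : ℕ} (M : Matrix (Fin m) (Fin m) ℝ) (i : Fin m) :
    Matrix.vecMul (fun k => (((Pi.single i 1 : Fin m → ℤ) k : ℤ) : ℝ)) M = M i := by
  funext j
  simp [Matrix.vecMul, dotProduct, Pi.single_apply, ite_mul,
    Finset.sum_ite_eq', apply_ite (fun z : ℤ => (z:ℝ))]

lemma zbasis_factor {m : ℕ} {B B' : Matrix (Fin m) (Fin m) ℝ} {Λ : Set (Fin m → ℝ)}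
    (h : IsZBasis B Λ) (h' : IsZBasis B' Λ) :
    ∃ Z : Matrix (Fin m) (Fin m) ℤ, B = Z.map (fun z => (z:ℝ)) * B' := by
  have hrow : ∀ i : Fin m, ∃ z : Fin m → ℤ,
      B i = Matrix.vecMul (fun k => (z k : ℝ)) B' := by
    intro i
    have hmem : B i ∈ Λ := by
      rw [h.2]
      exact ⟨Pi.single i 1, (vecMul_single_int B i).symm⟩
    rw [h'.2] at hmem
    exact hmem
  choose z hz using hrow
  refine ⟨Matrix.of (fun i k => z i k), ?_⟩
  ext i j
  rw [Matrix.mul_apply]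
  have := congrFun (hz i) j
  rw [this]
  simp [Matrix.vecMul, dotProduct]

lemma zbasis_det_abs_eq {m : ℕ} {B B' : Matrix (Fin m) (Fin m) ℝ} {Λ : Set (Fin m → ℝ)}
    (h : IsZBasis B Λ) (h' : IsZBasis B' Λ) : |B.det| = |B'.det| := by
  obtain ⟨Z, hZ⟩ := zbasis_factor h h'
  obtain ⟨Z', hZ'⟩ := zbasis_factor h' h
  have hmap : ∀ W : Matrix (Fin m) (Fin m) ℤ,
      (W.map (fun z => (z:ℝ))).det = ((W.det : ℤ) : ℝ) := by
    intro W
    have := RingHom.map_det (Int.castRingHom ℝ) W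
    simpa using this.symm
  have hdet : B.det = ((Z.det : ℤ):ℝ) * B'.det := by rw [hZ, Matrix.det_mul, hmap]
  have hdet' : B'.det = ((Z'.det : ℤ):ℝ) * B.det := by rw [hZ', Matrix.det_mul, hmap]
  have hprod : ((Z.det * Z'.det : ℤ):ℝ) = 1 := by
    have : B.det = ((Z.det : ℤ):ℝ) * (((Z'.det : ℤ):ℝ) * B.det) := by
      rw [← hdet']; exact hdet
    have h2 : B.det * (((Z.det * Z'.det : ℤ):ℝ) - 1) = 0 := by rw [Int.cast_mul]; linarith [this]
    rcases mul_eq_zero.mp h2 with h3 | h3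
    · exact absurd h3 h.1
    · linarith
  have hint : Z.det * Z'.det = 1 := by exact_mod_cast hprod
  have habs : |Z.det| = 1 := Int.isUnit_iff.mp (IsUnit.of_mul_eq_one _ hint) |>.elim
    (fun h => by rw [h]; rfl) (fun h => by rw [h]; rfl)
  rw [hdet, abs_mul]
  have : |((Z.det : ℤ):ℝ)| = 1 := by
    rw [← Int.cast_abs, habs]
    norm_num
  rw [this, one_mul]

-- ====== final assembly ======

lemma isZBasis_Bmat (t : ℕ) : IsZBasis (Bmat t) (BW t) :=
  ⟨Bmat_det_ne_zero t, bw_eq_span t⟩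

lemma bw_gain {t : ℕ} (ht : 1 ≤ t) (B : Matrix (Fin (2^t)) (Fin (2^t)) ℝ)
    (hB : IsZBasis B (BW t)) :
    codingGain (BW t) B = Real.sqrt ((2 ^ t : ℝ) / 2) := by
  have h2 : (0:ℝ) < 2 := two_pos
  set k : ℕ := (t - 1) * 2^(t-1) with hkdef
  set a : ℝ := (t:ℝ) - 1 with hadef
  have hk : ((k:ℕ):ℝ) = a * (2:ℝ)^(t-1:ℕ) := by
    rw [hkdef, hadef]
    push_cast [Nat.cast_sub ht]
    ring
  have habs : |B.det| = Real.sqrt ((2:ℝ)^k) := by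
    rw [zbasis_det_abs_eq hB (isZBasis_Bmat t), ← Real.sqrt_sq_eq_abs, Bmat_det_sq ht]
  have e1 : ((2:ℝ)^t)/2 = (2:ℝ) ^ a := by
    rw [hadef, Real.rpow_sub h2, Real.rpow_one, Real.rpow_natCast]
  have hden : |B.det| ^ ((2:ℝ)/(((2:ℕ)^t : ℕ):ℝ)) = (2:ℝ) ^ (a/2) := by
    rw [habs, Real.sqrt_eq_rpow, ← Real.rpow_natCast 2 k, ← Real.rpow_mul h2.le,
      ← Real.rpow_mul h2.le]
    congr 1
    have hcast : (((2:ℕ)^t : ℕ):ℝ) = (2:ℝ)^(t-1:ℕ) * 2 := by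
      push_cast
      rw [← pow_succ]
      congr 1
      omega
    rw [hk, hcast]
    have hpos : (0:ℝ) < (2:ℝ)^(t-1:ℕ) := by positivity
    field_simp
  have hsqrt : Real.sqrt ((2:ℝ)^a) = (2:ℝ) ^ (a/2) := by
    rw [Real.sqrt_eq_rpow, ← Real.rpow_mul h2.le]
    ring_nf
  rw [codingGain, minDist, minDist_bw ht, e1]
  rw [show ((2^t : ℕ):ℝ) = (((2:ℕ)^t : ℕ):ℝ) from rfl, hden, hsqrt]
  rw [show (2:ℝ)^a = (2:ℝ)^(a/2) * (2:ℝ)^(a/2) by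
    rw [← Real.rpow_add h2]; ring_nf]
  have hpos : (0:ℝ) < (2:ℝ)^(a/2) := Real.rpow_pos_of_pos h2 _
  field_simp

/-- `γ(BW_n) = d(BW_n)/vol(BW_n)^{2/n} = √(n/2)`; in particular
`γ(BW_{2n}) = √2·γ(BW_n)`. -/
theorem bw_coding_gain :
    ∀ t : ℕ, 1 ≤ t →
      (∀ B : Matrix (Fin (2 ^ t)) (Fin (2 ^ t)) ℝ, IsZBasis B (BW t) →
        codingGain (BW t) B = Real.sqrt ((2 ^ t : ℝ) / 2)) ∧
      (∀ B : Matrix (Fin (2 ^ t)) (Fin (2 ^ t)) ℝ,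
       ∀ B' : Matrix (Fin (2 ^ (t + 1))) (Fin (2 ^ (t + 1))) ℝ,
        IsZBasis B (BW t) → IsZBasis B' (BW (t + 1)) →
        codingGain (BW (t + 1)) B' = Real.sqrt 2 * codingGain (BW t) B) := by
  intro t ht
  refine ⟨fun B hB => bw_gain ht B hB, fun B B' hB hB' => ?_⟩
  rw [bw_gain ht B hB, bw_gain (by omega : 1 ≤ t+1) B' hB']
  rw [← Real.sqrt_mul (by norm_num : (0:ℝ) ≤ 2)]
  congr 1
  rw [pow_succ]
  ring
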